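/- For all nonnegative integers n and m, the partisan chocolate game position PC(n,m) is a number, i.e., it is a numeric pregame (every Left option is strictly less than every Right option, hereditarily). -/

import Mathlib

universe u

namespace SetTheory

/-- Pre-games (removed from Mathlib; reinstated with the old Mathlib meaning). -/
inductive PGame : Type (u + 1)
  | mk : ∀ α β : Type u, (α → PGame) → (β → PGame) → PGame

namespace PGame

/-- Simultaneous definition of `x ≤ y` (first component) and `x ⧏ y` (second component),
as in the old Mathlib `SetTheory.PGame`. -/
noncomputable def leLF (x : PGame.{u}) : PGame.{u} → Prop × Prop :=
  PGame.rec (motive := fun _ => PGame.{u} → Prop × Prop)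
    (fun _ _ _ _ IHxL IHxR y =>
      PGame.rec (motive := fun _ => Prop × Prop)
        (fun yl yr yL yR IHyL IHyR =>
          ((∀ i, (IHxL i (mk yl yr yL yR)).2) ∧ ∀ j, (IHyR j).2,
            (∃ i, (IHyL i).1) ∨ ∃ j, (IHxR j (mk yl yr yL yR)).1)) y) x

instance : LE PGame.{u} :=
  ⟨fun x y => (leLF x y).1⟩

instance : LT PGame.{u} :=
  ⟨fun x y => x ≤ y ∧ ¬y ≤ x⟩

/-- A pre-game is numeric if, hereditarily, every left option is less than every right option. -/
def Numeric : PGame.{u} → Prop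
  | ⟨_, _, L, R⟩ => (∀ i j, L i < R j) ∧ (∀ i, Numeric (L i)) ∧ ∀ j, Numeric (R j)

end PGame

end SetTheory

open SetTheory

/-- The partisan chocolate game position `PC n m`.
Left options: `PC n' m` with `n' < n` and `n' + m` even, and `PC n m'` with `m' < m` and
`n + m'` even. Right options: the same with "odd" in place of "even". -/
def PC : ℕ → ℕ → SetTheory.PGame
  | n, m =>
    SetTheory.PGame.mk
      {p : ℕ × ℕ // (p.2 = m ∧ p.1 < n ∧ Even (p.1 + m)) ∨ (p.1 = n ∧ p.2 < m ∧ Even (n + p.2))}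
      {p : ℕ × ℕ // (p.2 = m ∧ p.1 < n ∧ Odd (p.1 + m)) ∨ (p.1 = n ∧ p.2 < m ∧ Odd (n + p.2))}
      (fun p => PC p.1.1 p.1.2)
      (fun p => PC p.1.1 p.1.2)
termination_by n m => n + m
decreasing_by
  all_goals rcases p.2 with ⟨h1, h2, -⟩ | ⟨h1, h2, -⟩ <;> omega

namespace SetTheory.PGame

def LF (x y : PGame.{u}) : Prop := (leLF x y).2

infix:50 " ⧏ " => SetTheory.PGame.LF

def LeftMoves : PGame.{u} → Type u
  | mk l _ _ _ => l

def RightMoves : PGame.{u} → Type u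
  | mk _ r _ _ => r

def moveLeft : ∀ g : PGame.{u}, LeftMoves g → PGame.{u}
  | mk _l _ L _ => L

def moveRight : ∀ g : PGame.{u}, RightMoves g → PGame.{u}
  | mk _ _r _ R => R

@[simp]
theorem moveLeft_mk {xl xr : Type u} {xL : xl → PGame.{u}} {xR : xr → PGame.{u}} :
    (mk xl xr xL xR).moveLeft = xL := rfl

@[simp]
theorem moveRight_mk {xl xr : Type u} {xL : xl → PGame.{u}} {xR : xr → PGame.{u}} :
    (mk xl xr xL xR).moveRight = xR := rfl

theorem mk_le_mk {xl xr : Type u} {xL : xl → PGame.{u}} {xR : xr → PGame.{u}}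
    {yl yr : Type u} {yL : yl → PGame.{u}} {yR : yr → PGame.{u}} :
    mk xl xr xL xR ≤ mk yl yr yL yR ↔
      (∀ i, xL i ⧏ mk yl yr yL yR) ∧ ∀ j, mk xl xr xL xR ⧏ yR j := Iff.rfl

theorem mk_lf_mk {xl xr : Type u} {xL : xl → PGame.{u}} {xR : xr → PGame.{u}}
    {yl yr : Type u} {yL : yl → PGame.{u}} {yR : yr → PGame.{u}} :
    mk xl xr xL xR ⧏ mk yl yr yL yR ↔
      (∃ i, mk xl xr xL xR ≤ yL i) ∨ ∃ j, xR j ≤ mk yl yr yL yR := Iff.rfl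

theorem lf_iff_not_le_aux : ∀ x y : PGame.{u},
    (x ⧏ y ↔ ¬ y ≤ x) ∧ (y ⧏ x ↔ ¬ x ≤ y) := by
  intro x
  induction x with
  | mk xl xr xL xR ihxL ihxR =>
    intro y
    induction y with
    | mk yl yr yL yR ihyL ihyR =>
      constructor
      · rw [mk_lf_mk, mk_le_mk]
        simp only [fun i => (ihyL i).2, fun j => (ihxR j (mk yl yr yL yR)).2,
          not_and_or, not_forall, not_not]
      · rw [mk_lf_mk, mk_le_mk]
        simp only [fun i => (ihxL i (mk yl yr yL yR)).1, fun j => (ihyR j).1,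
          not_and_or, not_forall, not_not]

theorem le_refl (x : PGame.{u}) : x ≤ x := by
  induction x with
  | mk xl xr xL xR ihL ihR =>
    rw [mk_le_mk]
    constructor
    · intro i
      have h := ihL i
      rcases hz : xL i with ⟨a, b, c, d⟩
      rw [hz] at h
      rw [mk_lf_mk]
      exact Or.inl ⟨i, by rw [hz]; exact h⟩
    · intro j
      have h := ihR j
      rcases hz : xR j with ⟨a, b, c, d⟩
      rw [hz] at h
      rw [mk_lf_mk]
      exact Or.inr ⟨j, by rw [hz]; exact h⟩

theorem lt_iff_le_and_lf {x y : PGame.{u}} : x < y ↔ x ≤ y ∧ x ⧏ y := by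
  rw [(lf_iff_not_le_aux x y).1]
  exact Iff.rfl

theorem numeric_def {x : PGame.{u}} :
    Numeric x ↔ (∀ i j, x.moveLeft i < x.moveRight j) ∧
      (∀ i, Numeric (x.moveLeft i)) ∧ ∀ j, Numeric (x.moveRight j) := by
  cases x
  exact Iff.rfl

end SetTheory.PGame

namespace PCaux

open SetTheory.PGame

lemma PC_eq (n m : ℕ) : PC n m =
    SetTheory.PGame.mk
      {p : ℕ × ℕ // (p.2 = m ∧ p.1 < n ∧ Even (p.1 + m)) ∨ (p.1 = n ∧ p.2 < m ∧ Even (n + p.2))}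
      {p : ℕ × ℕ // (p.2 = m ∧ p.1 < n ∧ Odd (p.1 + m)) ∨ (p.1 = n ∧ p.2 < m ∧ Odd (n + p.2))}
      (fun p => PC p.1.1 p.1.2)
      (fun p => PC p.1.1 p.1.2) := by
  rw [PC]

lemma PC_le_iff {n m n' m' : ℕ} :
    PC n m ≤ PC n' m' ↔
      (∀ a b : ℕ, ((b = m ∧ a < n ∧ Even (a + m)) ∨ (a = n ∧ b < m ∧ Even (n + b))) →
        PC a b ⧏ PC n' m') ∧
      (∀ a b : ℕ, ((b = m' ∧ a < n' ∧ Odd (a + m')) ∨ (a = n' ∧ b < m' ∧ Odd (n' + b))) →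
        PC n m ⧏ PC a b) := by
  conv_lhs => rw [PC_eq n m, PC_eq n' m']
  rw [mk_le_mk]
  rw [← PC_eq n m, ← PC_eq n' m']
  constructor
  · rintro ⟨h1, h2⟩
    exact ⟨fun a b hp => h1 ⟨(a, b), hp⟩, fun a b hp => h2 ⟨(a, b), hp⟩⟩
  · rintro ⟨h1, h2⟩
    exact ⟨fun i => h1 i.1.1 i.1.2 i.2, fun j => h2 j.1.1 j.1.2 j.2⟩

lemma PC_lf_iff {n m n' m' : ℕ} :
    PC n m ⧏ PC n' m' ↔
      (∃ a b : ℕ, ((b = m' ∧ a < n' ∧ Even (a + m')) ∨ (a = n' ∧ b < m' ∧ Even (n' + b))) ∧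
        PC n m ≤ PC a b) ∨
      (∃ a b : ℕ, ((b = m ∧ a < n ∧ Odd (a + m)) ∨ (a = n ∧ b < m ∧ Odd (n + b))) ∧
        PC a b ≤ PC n' m') := by
  conv_lhs => rw [PC_eq n m, PC_eq n' m']
  rw [mk_lf_mk]
  rw [← PC_eq n m, ← PC_eq n' m']
  constructor
  · rintro (⟨i, hi⟩ | ⟨j, hj⟩)
    · exact Or.inl ⟨i.1.1, i.1.2, i.2, hi⟩
    · exact Or.inr ⟨j.1.1, j.1.2, j.2, hj⟩
  · rintro (⟨a, b, hp, h⟩ | ⟨a, b, hp, h⟩)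
    · exact Or.inl ⟨⟨(a, b), hp⟩, h⟩
    · exact Or.inr ⟨⟨(a, b), hp⟩, h⟩

def rank (n m : ℕ) : ℕ := n + m - 2 * (n % 2)

lemma main : ∀ k n m n' m', n + m + (n' + m') ≤ k →
    ((Even (n + m) → Odd (n' + m') → PC n m ≤ PC n' m' ∧ PC n m ⧏ PC n' m') ∧
     (Even (n + m) → Even (n' + m') → rank n m ≤ rank n' m' → PC n m ≤ PC n' m') ∧
     (Even (n + m) → Even (n' + m') → rank n m < rank n' m' → PC n m ⧏ PC n' m') ∧
     (Odd (n + m) → Odd (n' + m') → n' + m' ≤ n + m → PC n m ≤ PC n' m') ∧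
     (Odd (n + m) → Odd (n' + m') → n' + m' < n + m → PC n m ⧏ PC n' m')) := by
  intro k
  induction k with
  | zero =>
    intro n m n' m' hk
    have hn : n = 0 ∧ m = 0 ∧ n' = 0 ∧ m' = 0 := by omega
    obtain ⟨rfl, rfl, rfl, rfl⟩ := hn
    simp only [Nat.odd_iff] at *
    refine ⟨?_, fun _ _ _ => le_refl _, ?_, ?_, ?_⟩ <;> simp [rank]
  | succ k ih =>
    intro n m n' m' hk
    simp only [Nat.even_iff, Nat.odd_iff] at *
    -- the (I)-≤ part, as it's used in both directions
    refine ⟨fun he ho => ?_, fun he he' hr => ?_, fun he he' hr => ?_,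
            fun ho ho' hs => ?_, fun ho ho' hs => ?_⟩
    · -- (I): even < odd
      constructor
      · rw [PC_le_iff]
        constructor
        · rintro a b (⟨rfl, h1, h2⟩ | ⟨rfl, h1, h2⟩) <;>
            rw [Nat.even_iff] at h2 <;>
            exact ((ih a b n' m' (by omega)).1 (by omega) (by omega)).2
        · rintro a b (⟨rfl, h1, h2⟩ | ⟨rfl, h1, h2⟩) <;>
            rw [Nat.odd_iff] at h2 <;>
            exact ((ih n m a b (by omega)).1 (by omega) (by omega)).2
      · -- the lf part
        rw [PC_lf_iff]
        by_cases hc : rank n m ≤ n' + m' - 1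
        · -- use a left option of (n', m') of rank n'+m'-1
          left
          by_cases hn' : n' % 2 = 1
          · refine ⟨n' - 1, m', Or.inl ⟨rfl, by omega, by rw [Nat.even_iff]; omega⟩, ?_⟩
            exact (ih n m (n' - 1) m' (by omega)).2.1 (by omega) (by omega)
              (by unfold rank at *; omega)
          · refine ⟨n', m' - 1, Or.inr ⟨rfl, by omega, by rw [Nat.even_iff]; omega⟩, ?_⟩
            exact (ih n m n' (m' - 1) (by omega)).2.1 (by omega) (by omega)
              (by unfold rank at *; omega)
        · -- rank n m ≥ n'+m'+1 : use a right option of (n, m) of sum n+m-1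
          right
          have hs1 : n' + m' + 1 ≤ rank n m := by unfold rank at *; omega
          have hnm : 2 ≤ n + m := by unfold rank at *; omega
          by_cases hn1 : 1 ≤ n
          · refine ⟨n - 1, m, Or.inl ⟨rfl, by omega, by rw [Nat.odd_iff]; omega⟩, ?_⟩
            exact (ih (n - 1) m n' m' (by omega)).2.2.2.1 (by omega)
              (by omega) (by unfold rank at *; omega)
          · refine ⟨n, m - 1, Or.inr ⟨rfl, by omega, by rw [Nat.odd_iff]; omega⟩, ?_⟩
            exact (ih n (m - 1) n' m' (by omega)).2.2.2.1 (by omega)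
              (by omega) (by unfold rank at *; omega)
    · -- (II): even-even ≤
      rw [PC_le_iff]
      constructor
      · rintro a b (⟨rfl, h1, h2⟩ | ⟨rfl, h1, h2⟩) <;>
          rw [Nat.even_iff] at h2 <;>
          exact (ih a b n' m' (by omega)).2.2.1 (by omega) (by omega)
            (by unfold rank at *; omega)
      · rintro a b (⟨rfl, h1, h2⟩ | ⟨rfl, h1, h2⟩) <;>
          rw [Nat.odd_iff] at h2 <;>
          exact ((ih n m a b (by omega)).1 (by omega) (by omega)).2
    · -- (II'): even-even strict: lf
      rw [PC_lf_iff]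
      left
      have hr2 : n + m - 2 * (n % 2) + 2 ≤ n' + m' - 2 * (n' % 2) := by
        unfold rank at hr; omega
      by_cases hn2 : 2 ≤ n'
      · refine ⟨n' - 2, m', Or.inl ⟨rfl, by omega, by rw [Nat.even_iff]; omega⟩, ?_⟩
        exact (ih n m (n' - 2) m' (by omega)).2.1 (by omega) (by omega)
          (by unfold rank at *; omega)
      · refine ⟨n', m' - 2, Or.inr ⟨rfl, by omega, by rw [Nat.even_iff]; omega⟩, ?_⟩
        exact (ih n m n' (m' - 2) (by omega)).2.1 (by omega) (by omega)
          (by unfold rank at *; omega)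
    · -- (III): odd-odd ≤ (decreasing in sum)
      rw [PC_le_iff]
      constructor
      · rintro a b (⟨rfl, h1, h2⟩ | ⟨rfl, h1, h2⟩) <;>
          rw [Nat.even_iff] at h2 <;>
          exact ((ih a b n' m' (by omega)).1 (by omega) (by omega)).2
      · rintro a b (⟨rfl, h1, h2⟩ | ⟨rfl, h1, h2⟩) <;>
          rw [Nat.odd_iff] at h2 <;>
          exact (ih n m a b (by omega)).2.2.2.2 (by omega)
            (by omega) (by omega)
    · -- (III'): odd-odd strict: lf
      rw [PC_lf_iff]
      right
      by_cases hn2 : 2 ≤ n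
      · refine ⟨n - 2, m, Or.inl ⟨rfl, by omega, by rw [Nat.odd_iff]; omega⟩, ?_⟩
        exact (ih (n - 2) m n' m' (by omega)).2.2.2.1 (by omega)
          (by omega) (by omega)
      · refine ⟨n, m - 2, Or.inr ⟨rfl, by omega, by rw [Nat.odd_iff]; omega⟩, ?_⟩
        exact (ih n (m - 2) n' m' (by omega)).2.2.2.1 (by omega)
          (by omega) (by omega)

lemma even_lt_odd {n m n' m' : ℕ} (he : Even (n + m)) (ho : Odd (n' + m')) :
    PC n m < PC n' m' := by
  have h := (main (n + m + (n' + m')) n m n' m' le_rfl).1 he ho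
  exact lt_iff_le_and_lf.2 h

lemma numeric_aux : ∀ k n m, n + m ≤ k → (PC n m).Numeric := by
  intro k
  induction k with
  | zero =>
    intro n m hk
    have : n = 0 ∧ m = 0 := by omega
    obtain ⟨rfl, rfl⟩ := this
    rw [PC_eq, numeric_def]
    refine ⟨?_, ?_, ?_⟩ <;> rintro ⟨⟨a, b⟩, hp | hp⟩ <;> simp_all <;> omega
  | succ k ih =>
    intro n m hk
    rw [PC_eq, numeric_def]
    refine ⟨fun i j => ?_, fun i => ?_, fun j => ?_⟩
    · simp only [moveLeft_mk, moveRight_mk]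
      apply even_lt_odd
      · rcases i.2 with ⟨h1, h2, h3⟩ | ⟨h1, h2, h3⟩
        · rw [h1]; exact h3
        · rw [h1]; exact h3
      · rcases j.2 with ⟨h1, h2, h3⟩ | ⟨h1, h2, h3⟩
        · rw [h1]; exact h3
        · rw [h1]; exact h3
    · simp only [moveLeft_mk]
      rcases i.2 with ⟨h1, h2, -⟩ | ⟨h1, h2, -⟩ <;> exact ih _ _ (by omega)
    · simp only [moveRight_mk]
      rcases j.2 with ⟨h1, h2, -⟩ | ⟨h1, h2, -⟩ <;> exact ih _ _ (by omega)

end PCaux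

theorem stmt_9 (n m : ℕ) : (PC n m).Numeric := by
  exact PCaux.numeric_aux (n + m) n m le_rfl
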